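/- Let A be a normal n×n complex matrix and q ≥ 0. Then for all B ∈ M_n(ℂ), ‖AB − qBA‖_F² ≤ (1 + q²)‖A‖_F²‖B‖_F². -/

import Mathlib

open Matrix Module.End
open scoped BigOperators Matrix

noncomputable def frobSq {n : ℕ} (M : Matrix (Fin n) (Fin n) ℂ) : ℝ :=
  ∑ i, ∑ j, ‖M i j‖ ^ 2

lemma frobSq_eq_trace {n : ℕ} (M : Matrix (Fin n) (Fin n) ℂ) :
    (frobSq M : ℂ) = Matrix.trace (Mᴴ * M) := by
  simp only [frobSq, Matrix.trace, Matrix.diag, Matrix.mul_apply, conjTranspose_apply]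
  push_cast
  rw [Finset.sum_comm]
  congr 1; ext i; congr 1; ext j
  have h := Complex.normSq_eq_conj_mul_self (z := M j i)
  have h2 : ((Complex.normSq (M j i) : ℝ) : ℂ) = star (M j i) * M j i := by
    rw [h]; rfl
  rw [← h2, ← Complex.sq_norm]
  push_cast
  ring

lemma frobSq_conj {n : ℕ} (U M : Matrix (Fin n) (Fin n) ℂ)
    (h1 : star U * U = 1) (h2 : U * star U = 1) :
    frobSq (star U * M * U) = frobSq M := by
  have key : ((star U * M * U)ᴴ * (star U * M * U)).trace = (Mᴴ * M).trace := by
    have e1 : (star U * M * U)ᴴ * (star U * M * U)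
        = star U * (Mᴴ * (U * star U) * M) * U := by
      simp only [conjTranspose_mul, conjTranspose_conjTranspose, Matrix.star_eq_conjTranspose]
      noncomm_ring
    rw [e1, h2, mul_one, Matrix.trace_mul_comm (star U * (Mᴴ * M)) U, ← mul_assoc, h2, one_mul]
  have := (frobSq_eq_trace (star U * M * U)).trans (key.trans (frobSq_eq_trace M).symm)
  exact_mod_cast this

lemma coeff_bound {n : ℕ} (q : ℝ) (hq : 0 ≤ q) (d : Fin n → ℂ) (i j : Fin n) :
    ‖d i - (q : ℂ) * d j‖ ^ 2 ≤ (1 + q ^ 2) * ∑ k, ‖d k‖ ^ 2 := by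
  classical
  have hnn : ∀ k ∈ Finset.univ, (0:ℝ) ≤ ‖d k‖ ^ 2 := fun k _ => by positivity
  by_cases hij : i = j
  · subst hij
    have h1 : d i - (q : ℂ) * d i = (1 - (q:ℂ)) * d i := by ring
    have h2 : ‖d i‖ ^ 2 ≤ ∑ k, ‖d k‖ ^ 2 :=
      Finset.single_le_sum hnn (Finset.mem_univ i)
    rw [h1, norm_mul, mul_pow]
    have h3 : ‖(1 - (q:ℂ))‖ ^ 2 = (1 - q) ^ 2 := by
      rw [show ((1:ℂ) - (q:ℂ)) = ((1 - q : ℝ) : ℂ) by push_cast; ring,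
        Complex.norm_real, Real.norm_eq_abs, sq_abs]
    rw [h3]
    nlinarith [norm_nonneg (d i), sq_nonneg (‖d i‖)]
  · have hpair : ‖d i‖ ^ 2 + ‖d j‖ ^ 2 ≤ ∑ k, ‖d k‖ ^ 2 := by
      have hsub : ({i, j} : Finset (Fin n)) ⊆ Finset.univ := Finset.subset_univ _
      have := Finset.sum_le_sum_of_subset_of_nonneg (f := fun k => ‖d k‖ ^ 2) hsub
        (fun k _ _ => by positivity)
      rwa [Finset.sum_pair hij] at this
    have htri : ‖d i - (q : ℂ) * d j‖ ≤ ‖d i‖ + q * ‖d j‖ := by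
      calc ‖d i - (q : ℂ) * d j‖ ≤ ‖d i‖ + ‖(q : ℂ) * d j‖ := norm_sub_le _ _
        _ = ‖d i‖ + q * ‖d j‖ := by
            rw [norm_mul, Complex.norm_real, Real.norm_eq_abs, abs_of_nonneg hq]
    have hsq : ‖d i - (q : ℂ) * d j‖ ^ 2 ≤ (‖d i‖ + q * ‖d j‖) ^ 2 := by
      have h0 : (0:ℝ) ≤ ‖d i - (q : ℂ) * d j‖ := norm_nonneg _
      nlinarith
    have hcs : (‖d i‖ + q * ‖d j‖) ^ 2 ≤ (1 + q ^ 2) * (‖d i‖ ^ 2 + ‖d j‖ ^ 2) := by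
      nlinarith [sq_nonneg (‖d j‖ - q * ‖d i‖)]
    nlinarith [sq_nonneg q]

lemma diag_core {n : ℕ} (q : ℝ) (hq : 0 ≤ q) (d : Fin n → ℂ)
    (C : Matrix (Fin n) (Fin n) ℂ) :
    frobSq (diagonal d * C - (q : ℂ) • (C * diagonal d))
      ≤ (1 + q ^ 2) * (∑ k, ‖d k‖ ^ 2) * frobSq C := by
  have hentry : ∀ i j, (diagonal d * C - (q : ℂ) • (C * diagonal d)) i j
      = (d i - (q : ℂ) * d j) * C i j := by
    intro i j
    simp [Matrix.sub_apply, Matrix.smul_apply, Matrix.diagonal_mul, Matrix.mul_diagonal]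
    ring
  unfold frobSq
  calc ∑ i, ∑ j, ‖(diagonal d * C - (q : ℂ) • (C * diagonal d)) i j‖ ^ 2
      = ∑ i, ∑ j, ‖d i - (q : ℂ) * d j‖ ^ 2 * ‖C i j‖ ^ 2 := by
        refine Finset.sum_congr rfl fun i _ => Finset.sum_congr rfl fun j _ => ?_
        rw [hentry, norm_mul, mul_pow]
    _ ≤ ∑ i, ∑ j, ((1 + q ^ 2) * ∑ k, ‖d k‖ ^ 2) * ‖C i j‖ ^ 2 := by
        refine Finset.sum_le_sum fun i _ => Finset.sum_le_sum fun j _ => ?_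
        exact mul_le_mul_of_nonneg_right (coeff_bound q hq d i j) (by positivity)
    _ = (1 + q ^ 2) * (∑ k, ‖d k‖ ^ 2) * ∑ i, ∑ j, ‖C i j‖ ^ 2 := by
        simp only [← Finset.mul_sum, mul_assoc]

set_option maxHeartbeats 1600000 in
lemma normal_spectral {n : ℕ} (A : Matrix (Fin n) (Fin n) ℂ)
    (hA : A * Aᴴ = Aᴴ * A) :
    ∃ (U : Matrix (Fin n) (Fin n) ℂ) (d : Fin n → ℂ),
      star U * U = 1 ∧ U * star U = 1 ∧ star U * A * U = diagonal d := by
  classical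
  set T : EuclideanSpace ℂ (Fin n) →ₗ[ℂ] EuclideanSpace ℂ (Fin n) :=
    Matrix.toEuclideanLin A with hT
  have hadj : Matrix.toEuclideanLin Aᴴ = LinearMap.adjoint T :=
    Matrix.toEuclideanLin_conjTranspose_eq_adjoint A
  have hmul : ∀ M N : Matrix (Fin n) (Fin n) ℂ,
      Matrix.toEuclideanLin (M * N)
        = (Matrix.toEuclideanLin M) * (Matrix.toEuclideanLin N) := by
    intro M N
    apply LinearMap.ext; intro v
    simp only [Matrix.toEuclideanLin_apply, Module.End.mul_apply]
    ext i
    simp [Matrix.mulVec_mulVec]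
  have hcomm : T * LinearMap.adjoint T = LinearMap.adjoint T * T := by
    have := congrArg Matrix.toEuclideanLin hA
    rw [hmul, hmul, hadj] at this
    exact this
  set S₁ : EuclideanSpace ℂ (Fin n) →ₗ[ℂ] EuclideanSpace ℂ (Fin n) :=
    T + LinearMap.adjoint T with hS₁def
  set S₂ : EuclideanSpace ℂ (Fin n) →ₗ[ℂ] EuclideanSpace ℂ (Fin n) :=
    Complex.I • (LinearMap.adjoint T - T) with hS₂def
  have hS₁ : S₁.IsSymmetric := by
    rw [LinearMap.isSymmetric_iff_isSelfAdjoint, _root_.isSelfAdjoint_iff,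
      LinearMap.star_eq_adjoint, hS₁def, map_add, LinearMap.adjoint_adjoint, add_comm]
  have hS₂ : S₂.IsSymmetric := by
    rw [LinearMap.isSymmetric_iff_isSelfAdjoint, _root_.isSelfAdjoint_iff,
      LinearMap.star_eq_adjoint, hS₂def, LinearEquiv.map_smulₛₗ, map_sub,
      LinearMap.adjoint_adjoint]
    simp only [RingHom.coe_coe, Complex.conj_I]
    rw [neg_smul, ← smul_neg, neg_sub]
  have hC : Commute S₁ S₂ := by
    show S₁ * S₂ = S₂ * S₁
    have e1 : (T + LinearMap.adjoint T) * (LinearMap.adjoint T - T)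
        = T * LinearMap.adjoint T - T * T
          + LinearMap.adjoint T * LinearMap.adjoint T - LinearMap.adjoint T * T := by
      noncomm_ring
    have e2 : (LinearMap.adjoint T - T) * (T + LinearMap.adjoint T)
        = LinearMap.adjoint T * T - T * T
          + LinearMap.adjoint T * LinearMap.adjoint T - T * LinearMap.adjoint T := by
      noncomm_ring
    rw [hS₁def, hS₂def, mul_smul_comm, smul_mul_assoc, e1, e2, hcomm]
  have hn : Module.finrank ℂ (EuclideanSpace ℂ (Fin n)) = n := finrank_euclideanSpace_fin
  have hInt := LinearMap.IsSymmetric.directSum_isInternal_of_commute hS₁ hS₂ hC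
  have hFam := LinearMap.IsSymmetric.orthogonalFamily_eigenspace_inf_eigenspace hS₁ hS₂
  have hind : iSupIndep (fun i : ℂ × ℂ => eigenspace S₁ i.2 ⊓ eigenspace S₂ i.1) :=
    ((DirectSum.isInternal_submodule_iff_iSupIndep_and_iSup_eq_top _).mp hInt).1
  letI := hind.fintypeNeBotOfFiniteDimensional
  have hInt' := DirectSum.isInternal_ne_bot_iff.mpr hInt
  have hFam' := hFam.comp
    (f := fun p : {p : ℂ × ℂ // eigenspace S₁ p.2 ⊓ eigenspace S₂ p.1 ≠ ⊥} => p.1)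
    Subtype.val_injective
  set b := hInt'.subordinateOrthonormalBasis hn hFam' with hb
  set μ : Fin n → ℂ × ℂ :=
    fun a => (hInt'.subordinateOrthonormalBasisIndex hn a hFam' :
      {p : ℂ × ℂ // eigenspace S₁ p.2 ⊓ eigenspace S₂ p.1 ≠ ⊥}).1
    with hμ
  have hmem : ∀ a, b a ∈ eigenspace S₁ (μ a).2 ⊓ eigenspace S₂ (μ a).1 :=
    fun a => hInt'.subordinateOrthonormalBasis_subordinate hn a hFam'
  set d : Fin n → ℂ := fun a => (2⁻¹ : ℂ) * ((μ a).2 + Complex.I * (μ a).1) with hd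
  have hhalf : T = (2⁻¹ : ℂ) • (S₁ + Complex.I • S₂) := by
    have h3 : Complex.I • S₂ = -(LinearMap.adjoint T - T) := by
      rw [hS₂def, smul_smul, Complex.I_mul_I, neg_one_smul]
    rw [h3, hS₁def]
    module
  have hTb : ∀ a, T (b a) = d a • b a := by
    intro a
    have h1 : S₁ (b a) = (μ a).2 • b a := mem_eigenspace_iff.mp (hmem a).1
    have h2 : S₂ (b a) = (μ a).1 • b a := mem_eigenspace_iff.mp (hmem a).2
    rw [hhalf]
    simp only [LinearMap.smul_apply, LinearMap.add_apply, h1, h2, smul_smul]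
    rw [← add_smul, smul_smul, hd]
  set U : Matrix (Fin n) (Fin n) ℂ := Matrix.of fun i a => (b a) i with hU
  have h1 : star U * U = 1 := by
    ext a c
    have horth := orthonormal_iff_ite.mp b.orthonormal a c
    rw [PiLp.inner_apply] at horth
    simp only [Matrix.mul_apply, Matrix.star_apply, hU, Matrix.of_apply, Matrix.one_apply]
    simpa [mul_comm] using horth
  have h2 : U * star U = 1 := mul_eq_one_comm.mp h1
  have hAU : A * U = U * diagonal d := by
    ext i a
    have := congrArg (fun (v : EuclideanSpace ℂ (Fin n)) => v i) (hTb a)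
    have hT' : (T (b a)) i = (A *ᵥ fun j => (b a) j) i := by
      rw [hT, Matrix.toEuclideanLin_apply]
    have hsm : ((d a • b a : EuclideanSpace ℂ (Fin n))) i = d a * (b a) i := rfl
    rw [Matrix.mul_apply, Matrix.mul_diagonal]
    have : (A *ᵥ fun j => (b a) j) i = d a * (b a) i := by
      rw [← hT', hTb a, hsm]
    simpa [hU, Matrix.mulVec, dotProduct] using this.trans (mul_comm _ _)
  refine ⟨U, d, h1, h2, ?_⟩
  rw [mul_assoc, hAU, ← mul_assoc, h1, one_mul]

theorem stmt_3 {n : ℕ} (q : ℝ) (hq : 0 ≤ q)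
    (A : Matrix (Fin n) (Fin n) ℂ) (hA : A * Aᴴ = Aᴴ * A)
    (B : Matrix (Fin n) (Fin n) ℂ) :
    frobSq (A * B - (q : ℂ) • (B * A)) ≤ (1 + q ^ 2) * frobSq A * frobSq B := by
  obtain ⟨U, d, h1, h2, hd⟩ := normal_spectral A hA
  set C : Matrix (Fin n) (Fin n) ℂ := star U * B * U with hC
  have hmul2 : ∀ M N : Matrix (Fin n) (Fin n) ℂ,
      star U * (M * N) * U = (star U * M * U) * (star U * N * U) := by
    intro M N
    have e : (star U * M * U) * (star U * N * U)
        = star U * (M * (U * star U) * N) * U := by noncomm_ring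
    rw [e, h2, mul_one]
  have key : star U * (A * B - (q : ℂ) • (B * A)) * U
      = diagonal d * C - (q : ℂ) • (C * diagonal d) := by
    rw [mul_sub, sub_mul, Matrix.mul_smul, Matrix.smul_mul, hmul2 A B, hmul2 B A, hd]
  have hfe : frobSq (A * B - (q : ℂ) • (B * A))
      = frobSq (diagonal d * C - (q : ℂ) • (C * diagonal d)) := by
    rw [← key, frobSq_conj U _ h1 h2]
  have hdiagA : frobSq (diagonal d) = ∑ k, ‖d k‖ ^ 2 := by
    unfold frobSq
    refine Finset.sum_congr rfl fun i _ => ?_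
    rw [Finset.sum_eq_single i]
    · simp
    · intro j _ hji
      simp [Matrix.diagonal_apply_ne' d hji]
    · simp
  have hA' : frobSq A = ∑ k, ‖d k‖ ^ 2 := by
    rw [← frobSq_conj U A h1 h2, hd, hdiagA]
  have hB' : frobSq B = frobSq C := (frobSq_conj U B h1 h2).symm
  rw [hfe, hA', hB']
  exact diag_core q hq d C
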